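/- (Theorem 5.2(ii), two decision makers.) If the dynamic policy (γ₁*, γ₂*) with γ₂* : Y₁ × Ŷ' → U₂ is person-by-person optimal for J^D (i.e., J^D(γ₁*, γ₂*) ≤ J^D(γ₁, γ₂*) for every measurable γ₁ : Y₁ → U₁ and J^D(γ₁*, γ₂*) ≤ J^D(γ₁*, γ₂) for every measurable γ₂ : Y₁ × Ŷ' → U₂), then the control-sharing dynamic policy (γ₁*, γ̃₂*), where γ̃₂*(y, u, t) := γ₂*(y, t) ignores the shared action, is person-by-person optimal for J^{D,CS}: J^{D,CS}(γ₁*, γ̃₂*) ≤ J^{D,CS}(γ₁, γ̃₂*) for every measurable γ₁ : Y₁ → U₁, and J^{D,CS}(γ₁*, γ̃₂*) ≤ J^{D,CS}(γ₁*, β) for every measurable β : Y₁ × U₁ × Ŷ' → U₂. -/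
import Mathlib


open MeasureTheory
open scoped ENNReal

/-- **Theorem 5.2(ii) (two decision makers).** If the dynamic policy `(γ₁s, γ₂s)` is
person-by-person optimal for `JD`, then the control-sharing dynamic policy
`(γ₁s, (y, u, t) ↦ γ₂s (y, t))` (which ignores the shared action) is person-by-person
optimal for `JDCS`. -/
theorem pbp_dynamic_to_control_sharing_dynamic
    {Ω Ω₀ Y₁ Yh Yh' U₁ U₂ : Type*}
    [MeasurableSpace Ω] [MeasurableSpace Ω₀] [MeasurableSpace Y₁]
    [MeasurableSpace Yh] [MeasurableSpace Yh'] [MeasurableSpace U₁] [MeasurableSpace U₂]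
    (P : Measure Ω) [IsProbabilityMeasure P]
    (ω₀ : Ω → Ω₀) (y₁ : Ω → Y₁) (yhat₂ : Ω → Yh)
    (hω₀ : Measurable ω₀) (hy₁ : Measurable y₁) (hyhat₂ : Measurable yhat₂)
    (g : Yh × U₁ → Yh') (hg : Measurable g)
    (c : Ω₀ × U₁ × U₂ → ℝ≥0∞) (hc : Measurable c)
    (JD : (Y₁ → U₁) → (Y₁ × Yh' → U₂) → ℝ≥0∞)
    (JDCS : (Y₁ → U₁) → (Y₁ × U₁ × Yh' → U₂) → ℝ≥0∞)
    (hJD : ∀ γ₁ γ₂, JD γ₁ γ₂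
      = ∫⁻ ω, c (ω₀ ω, γ₁ (y₁ ω), γ₂ (y₁ ω, g (yhat₂ ω, γ₁ (y₁ ω)))) ∂P)
    (hJDCS : ∀ γ₁ γ₂cs, JDCS γ₁ γ₂cs
      = ∫⁻ ω, c (ω₀ ω, γ₁ (y₁ ω),
          γ₂cs (y₁ ω, γ₁ (y₁ ω), g (yhat₂ ω, γ₁ (y₁ ω)))) ∂P)
    (γ₁s : Y₁ → U₁) (γ₂s : Y₁ × Yh' → U₂)
    (hγ₁s : Measurable γ₁s) (hγ₂s : Measurable γ₂s)
    (hpbp₁ : ∀ γ₁ : Y₁ → U₁, Measurable γ₁ → JD γ₁s γ₂s ≤ JD γ₁ γ₂s)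
    (hpbp₂ : ∀ γ₂ : Y₁ × Yh' → U₂, Measurable γ₂ → JD γ₁s γ₂s ≤ JD γ₁s γ₂) :
    (∀ γ₁ : Y₁ → U₁, Measurable γ₁ →
      JDCS γ₁s (fun q => γ₂s (q.1, q.2.2)) ≤ JDCS γ₁ (fun q => γ₂s (q.1, q.2.2)))
    ∧ (∀ β : Y₁ × U₁ × Yh' → U₂, Measurable β →
      JDCS γ₁s (fun q => γ₂s (q.1, q.2.2)) ≤ JDCS γ₁s β) := by
  constructor
  · intro γ₁ hγ₁
    have h1 : JDCS γ₁s (fun q => γ₂s (q.1, q.2.2)) = JD γ₁s γ₂s := by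
      rw [hJDCS, hJD]
    have h2 : JDCS γ₁ (fun q => γ₂s (q.1, q.2.2)) = JD γ₁ γ₂s := by
      rw [hJDCS, hJD]
    rw [h1, h2]; exact hpbp₁ γ₁ hγ₁
  · intro β hβ
    have h1 : JDCS γ₁s (fun q => γ₂s (q.1, q.2.2)) = JD γ₁s γ₂s := by
      rw [hJDCS, hJD]
    have h2 : JDCS γ₁s β = JD γ₁s (fun p => β (p.1, γ₁s p.1, p.2)) := by
      rw [hJDCS, hJD]
    rw [h1, h2]
    exact hpbp₂ _ (hβ.comp (measurable_fst.prodMk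
      ((hγ₁s.comp measurable_fst).prodMk measurable_snd)))
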